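/- For every integer n ≥ 3 and every a ∈ [0,1], one has ∏_{l=2}^{n−1} (l − 1 + a)/l ≥ n^{a−1} / 2. -/

import Mathlib

lemma tele_prod : ∀ m : ℕ, 1 ≤ m →
    ∏ l ∈ Finset.Icc 2 m, ((l : ℝ) - 1) / l = 1 / m := by
  intro m hm
  induction m, hm using Nat.le_induction with
  | base => simp
  | succ m hm ih =>
    rw [Finset.prod_Icc_succ_top (by omega), ih]
    have hm0 : (m : ℝ) ≠ 0 := by positivity
    have hm1 : (m : ℝ) + 1 ≠ 0 := by positivity
    push_cast
    field_simp
    ring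

theorem prod_ratio_ge (n : ℕ) (hn : 3 ≤ n) (a : ℝ) (ha0 : 0 ≤ a) (ha1 : a ≤ 1) :
    (n : ℝ) ^ (a - 1) / 2 ≤ ∏ l ∈ Finset.Icc 2 (n - 1), ((l : ℝ) - 1 + a) / l := by
  have hn1 : 1 ≤ n - 1 := by omega
  have hnn : (1 : ℝ) ≤ ((n - 1 : ℕ) : ℝ) := by exact_mod_cast hn1
  have hm0 : (0 : ℝ) < ((n - 1 : ℕ) : ℝ) := by linarith
  have key : ∏ l ∈ Finset.Icc 2 (n - 1), (((l : ℝ) - 1) / l) ^ (1 - a)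
      ≤ ∏ l ∈ Finset.Icc 2 (n - 1), ((l : ℝ) - 1 + a) / l := by
    apply Finset.prod_le_prod
    · intro l hl
      have hl2 : 2 ≤ l := (Finset.mem_Icc.mp hl).1
      have hl2' : (2 : ℝ) ≤ l := by exact_mod_cast hl2
      exact Real.rpow_nonneg (div_nonneg (by linarith) (by linarith)) _
    · intro l hl
      have hl2 : 2 ≤ l := (Finset.mem_Icc.mp hl).1
      have hl2' : (2 : ℝ) ≤ l := by exact_mod_cast hl2
      have hlpos : (0 : ℝ) < l := by linarith
      have hp : (0 : ℝ) ≤ ((l : ℝ) - 1) / l := div_nonneg (by linarith) (by linarith)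
      have h := Real.geom_mean_le_arith_mean2_weighted (by linarith : (0:ℝ) ≤ 1 - a)
        ha0 hp zero_le_one (by ring)
      rw [Real.one_rpow, mul_one] at h
      calc (((l : ℝ) - 1) / l) ^ (1 - a) ≤ (1 - a) * (((l : ℝ) - 1) / l) + a * 1 := h
        _ = ((l : ℝ) - 1 + a) / l := by field_simp; ring
  have prodeq : ∏ l ∈ Finset.Icc 2 (n - 1), (((l : ℝ) - 1) / l) ^ (1 - a)
      = ((n - 1 : ℕ) : ℝ) ^ (a - 1) := by
    rw [Real.finset_prod_rpow _ _ (fun l hl => by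
      have hl2 : 2 ≤ l := (Finset.mem_Icc.mp hl).1
      have hl2' : (2 : ℝ) ≤ l := by exact_mod_cast hl2
      exact div_nonneg (by linarith) (by linarith)), tele_prod _ hn1, one_div,
      Real.inv_rpow hm0.le, ← Real.rpow_neg hm0.le, neg_sub]
  have h1 : ((n : ℝ)) ^ (a - 1) ≤ ((n - 1 : ℕ) : ℝ) ^ (a - 1) := by
    apply Real.rpow_le_rpow_of_nonpos hm0
    · have : (n - 1 : ℕ) ≤ n := by omega
      exact_mod_cast this
    · linarith
  have h2 : (0 : ℝ) ≤ (n : ℝ) ^ (a - 1) := by positivity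
  calc (n : ℝ) ^ (a - 1) / 2 ≤ (n : ℝ) ^ (a - 1) := by linarith
    _ ≤ ((n - 1 : ℕ) : ℝ) ^ (a - 1) := h1
    _ = _ := prodeq.symm
    _ ≤ _ := key
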